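/- Classical universal-hash second-moment identity: Let σ_{XD} = ∑_x σ_{D∧X=x} be a cq-state classical on X and ℋ universal₂ from {0,1}^n to {0,1}^ℓ. For any positive operator τ_D, (1/|ℋ|)∑_{h∈ℋ} tr{(id_K ⊗ τ_D^{−1}) ω²_{KD|S^H=h}} = (1 − 2^{−ℓ})·tr{(id_X ⊗ τ_D^{−1}) σ²_{XD}} + 2^{−ℓ}·tr{τ_D^{−1} σ_D²}, where ω_{KD|S^H=h} = ∑_k |k⟩⟨k| ⊗ ∑_{x: h(x)=k} σ_{D∧X=x}. (Here the universal₂ family is assumed perfectly universal: Pr_H[H(x)=H(y)] = 2^{−ℓ} exactly for x ≠ y.) -/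
import Mathlib


open Matrix Kronecker BigOperators Finset
open scoped ComplexOrder

noncomputable section

/-- Classical-quantum state assembled from blocks indexed by the classical register. -/
def cqState {C D : Type*} [DecidableEq C] (f : C → Matrix D D ℂ) :
    Matrix (C × D) (C × D) ℂ :=
  Matrix.of fun p q => if p.1 = q.1 then f p.1 p.2 q.2 else 0

lemma cq_mul {C D : Type*} [DecidableEq C] [Fintype C] [Fintype D] (g g' : C → Matrix D D ℂ) :
    cqState g * cqState g' = cqState (fun k => g k * g' k) := by
  ext ⟨a,i⟩ ⟨b,j⟩
  simp only [cqState, Matrix.mul_apply, Fintype.sum_prod_type, ite_mul, mul_ite,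
    zero_mul, mul_zero, Finset.sum_ite_eq, Finset.sum_ite_eq', Finset.mem_univ, if_true,
    Matrix.of_apply]
  split_ifs with h
  · subst h; rw [Finset.sum_comm]; simp [Finset.sum_ite_eq]
  · simp [h]

lemma trace_kron {C D : Type*} [DecidableEq C] [Fintype C] [Fintype D] [DecidableEq D]
    (A : Matrix D D ℂ) (m : C → Matrix D D ℂ) :
    ((1 ⊗ₖ A) * cqState m).trace = ∑ k, (A * m k).trace := by
  simp [Matrix.trace, Matrix.mul_apply, Matrix.diag, cqState, Fintype.sum_prod_type,
    Matrix.one_apply, ite_mul, mul_ite, Finset.sum_ite_eq, Finset.sum_ite_eq']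

lemma trace_mul_sum_sq {X D : Type*} [Fintype X] [Fintype D] [DecidableEq D]
    (A : Matrix D D ℂ) (f : X → Matrix D D ℂ) (s : Finset X) :
    (A * ((∑ x ∈ s, f x) * (∑ x ∈ s, f x))).trace
      = ∑ x ∈ s, ∑ y ∈ s, (A * (f x * f y)).trace := by
  rw [Finset.sum_mul_sum]
  simp [Finset.mul_sum, Matrix.trace_sum]

/-- Classical universal-hash second-moment identity. With `σ_{XD}` classical
on `X` (blocks `f x`), a perfectly universal₂ family `ℋ : {0,1}^n → {0,1}^ℓ`
(`Pr_H[H(x)=H(y)] = 2^{−ℓ}` exactly for `x ≠ y`), and any positive operator `τ_D`: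
`(1/|ℋ|)∑_h tr{(id_K ⊗ τ_D⁻¹) ω²_{KD|S^H=h}}
  = (1 − 2^{−ℓ})·tr{(id_X ⊗ τ_D⁻¹) σ²_{XD}} + 2^{−ℓ}·tr{τ_D⁻¹ σ_D²}`. -/
theorem stmt15 (n l dD : ℕ)
    (f : (Fin n → Bool) → Matrix (Fin dD) (Fin dD) ℂ)
    (hf : ∀ x, (f x).PosSemidef)
    (Hfam : Type) [Fintype Hfam] [Nonempty Hfam]
    (app : Hfam → (Fin n → Bool) → (Fin l → Bool))
    (huniv : ∀ x y : Fin n → Bool, x ≠ y →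
      ((Finset.univ.filter fun h => app h x = app h y).card : ℝ) / (Fintype.card Hfam)
        = ((2 : ℝ) ^ l)⁻¹)
    (τ : Matrix (Fin dD) (Fin dD) ℂ) (hτ : τ.PosSemidef) :
    (Fintype.card Hfam : ℂ)⁻¹ *
      ∑ h : Hfam,
        ((((1 : Matrix (Fin l → Bool) (Fin l → Bool) ℂ) ⊗ₖ τ⁻¹) *
          (cqState (fun k => ∑ x ∈ Finset.univ.filter (fun x => app h x = k), f x) *
           cqState (fun k => ∑ x ∈ Finset.univ.filter (fun x => app h x = k), f x))).trace)
    = (1 - ((2 : ℂ) ^ l)⁻¹) *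
        ((((1 : Matrix (Fin n → Bool) (Fin n → Bool) ℂ) ⊗ₖ τ⁻¹) *
          (cqState f * cqState f)).trace)
      + ((2 : ℂ) ^ l)⁻¹ * ((τ⁻¹ * ((∑ x, f x) * (∑ x, f x))).trace) := by
  classical
  set A := τ⁻¹ with hA
  set T : (Fin n → Bool) → (Fin n → Bool) → ℂ := fun x y => (A * (f x * f y)).trace with hT
  set c : ℂ := ((2 : ℂ) ^ l)⁻¹ with hc
  have hHcard : (0 : ℝ) < Fintype.card Hfam := by positivity
  have hHne : (Fintype.card Hfam : ℂ) ≠ 0 := by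
    exact_mod_cast Fintype.card_ne_zero
  -- coefficient lemma
  have hcoef : ∀ x y : Fin n → Bool,
      (Fintype.card Hfam : ℂ)⁻¹ *
        ((Finset.univ.filter fun h => app h y = app h x).card : ℂ)
      = if y = x then 1 else c := by
    intro x y
    by_cases hxy : y = x
    · subst hxy
      simp [Finset.filter_true_of_mem, inv_mul_cancel₀ hHne]
    · have hr := huniv y x hxy
      have hC := congrArg Complex.ofReal hr
      push_cast at hC
      rw [if_neg hxy, inv_mul_eq_div]
      exact hC
  -- per-hash computation
  have hstep : ∀ h : Hfam,
      (∑ k : Fin l → Bool,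
        (A * ((∑ x ∈ Finset.univ.filter (fun x => app h x = k), f x) *
              (∑ x ∈ Finset.univ.filter (fun x => app h x = k), f x))).trace)
      = ∑ x, ∑ y ∈ Finset.univ.filter (fun y => app h y = app h x), T x y := by
    intro h
    have : ∀ k : Fin l → Bool,
        (A * ((∑ x ∈ Finset.univ.filter (fun x => app h x = k), f x) *
              (∑ x ∈ Finset.univ.filter (fun x => app h x = k), f x))).trace
        = ∑ x ∈ Finset.univ.filter (fun x => app h x = k),
            ∑ y ∈ Finset.univ.filter (fun y => app h y = app h x), T x y := by
      intro k
      rw [trace_mul_sum_sq]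
      refine Finset.sum_congr rfl fun x hx => ?_
      rw [Finset.mem_filter] at hx
      rw [hx.2]
    rw [Finset.sum_congr rfl fun k _ => this k]
    exact Finset.sum_fiberwise _ _ _
  -- rewrite LHS
  simp only [cq_mul, trace_kron, hstep]
  -- swap sums, compute the h-sum
  rw [Finset.sum_comm, Finset.mul_sum]
  have hswap : ∀ x : Fin n → Bool,
      (Fintype.card Hfam : ℂ)⁻¹ *
        (∑ h : Hfam, ∑ y ∈ Finset.univ.filter (fun y => app h y = app h x), T x y)
      = ∑ y, (if y = x then 1 else c) * T x y := by
    intro x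
    have : (∑ h : Hfam, ∑ y ∈ Finset.univ.filter (fun y => app h y = app h x), T x y)
        = ∑ y, ((Finset.univ.filter fun h => app h y = app h x).card : ℂ) * T x y := by
      simp only [Finset.sum_filter]
      rw [Finset.sum_comm]
      refine Finset.sum_congr rfl fun y _ => ?_
      rw [← Finset.sum_filter, Finset.sum_const, nsmul_eq_mul, mul_comm]
    rw [this, Finset.mul_sum]
    refine Finset.sum_congr rfl fun y _ => ?_
    rw [← mul_assoc, hcoef x y]
  rw [Finset.sum_congr rfl fun x _ => hswap x]
  -- compute RHS
  rw [trace_mul_sum_sq A f Finset.univ]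
  -- finish algebraically
  have expand : ∀ x : Fin n → Bool,
      (∑ y, (if y = x then 1 else c) * T x y)
      = (1 - c) * T x x + ∑ y, c * T x y := by
    intro x
    have : ∀ y, (if y = x then 1 else c) * T x y
        = (if y = x then (1 - c) * T x x else 0) + c * T x y := by
      intro y
      split_ifs with hy
      · subst hy; ring
      · ring
    rw [Finset.sum_congr rfl fun y _ => this y, Finset.sum_add_distrib,
      Finset.sum_ite_eq' Finset.univ x (fun _ => (1 - c) * T x x)]
    simp
  rw [Finset.sum_congr rfl fun x _ => expand x, Finset.sum_add_distrib]
  simp only [hT, Finset.mul_sum]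


end
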